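/- Let ρ and σ be positive definite 2×2 density matrices, let λ_ρ be the largest eigenvalue of ρ and α_σ the smallest eigenvalue of σ, and assume α_σ < λ_ρ. Then the Umegaki relative entropy satisfies S(ρ‖σ) ≤ ‖ρ−σ‖₁ · λ_ρ · (log λ_ρ − log α_σ)/(λ_ρ − α_σ) ≤ ‖ρ−σ‖₁ · λ_ρ / α_σ. -/

import Mathlib

open Matrix ComplexOrder

/-- The trace norm of a complex matrix: the sum of its singular values,
realized as `Tr √(Aᴴ A)`. -/
noncomputable def traceNorm {d : ℕ} (A : Matrix (Fin d) (Fin d) ℂ) : ℝ :=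
  (((Matrix.posSemidef_conjTranspose_mul_self A).1.eigenvectorUnitary : Matrix (Fin d) (Fin d) ℂ) *
      Matrix.diagonal (((↑) : ℝ → ℂ) ∘ (Real.sqrt ·) ∘ (Matrix.posSemidef_conjTranspose_mul_self A).1.eigenvalues) *
      (star (Matrix.posSemidef_conjTranspose_mul_self A).1.eigenvectorUnitary :
        Matrix (Fin d) (Fin d) ℂ)).trace.re

/-- Functional calculus for a Hermitian matrix: apply `f` to the eigenvalues in an
orthonormal eigenbasis. -/
noncomputable def matFun {d : ℕ} {A : Matrix (Fin d) (Fin d) ℂ} (hA : A.IsHermitian)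
    (f : ℝ → ℝ) : Matrix (Fin d) (Fin d) ℂ :=
  (hA.eigenvectorUnitary : Matrix (Fin d) (Fin d) ℂ) *
    Matrix.diagonal (fun i => (f (hA.eigenvalues i) : ℂ)) *
    (star hA.eigenvectorUnitary : Matrix (Fin d) (Fin d) ℂ)

/-- `f : (0,∞) → ℝ` is operator monotone decreasing: for all positive definite matrices
`A ≤ B` (Loewner order) of any size, `f(B) ≤ f(A)`. -/
def OpMonoDecrOn (f : ℝ → ℝ) : Prop :=
  ∀ (n : ℕ) (A B : Matrix (Fin n) (Fin n) ℂ) (hA : A.PosDef) (hB : B.PosDef),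
    (B - A).PosSemidef → (matFun hA.1 f - matFun hB.1 f).PosSemidef

/-- The quasi-relative entropy `S_f(ρ‖σ) = Σ_{j,k} λ_j f(μ_k/λ_j) |⟨φ_k|ψ_j⟩|²` computed from
spectral decompositions `ρ = Σ_j λ_j |ψ_j⟩⟨ψ_j|`, `σ = Σ_k μ_k |φ_k⟩⟨φ_k|`. -/
noncomputable def quasiRelEntropy {d : ℕ} (f : ℝ → ℝ) {ρ σ : Matrix (Fin d) (Fin d) ℂ}
    (hρ : ρ.IsHermitian) (hσ : σ.IsHermitian) : ℝ :=
  ∑ j, ∑ k, hρ.eigenvalues j * f (hσ.eigenvalues k / hρ.eigenvalues j) *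
    ‖(inner ℂ (hσ.eigenvectorBasis k) (hρ.eigenvectorBasis j) : ℂ)‖ ^ 2

/-- The Umegaki relative entropy `S(ρ‖σ) = Tr(ρ (log ρ − log σ))`. -/
noncomputable def relEntropy {d : ℕ} {ρ σ : Matrix (Fin d) (Fin d) ℂ}
    (hρ : ρ.IsHermitian) (hσ : σ.IsHermitian) : ℝ :=
  ((ρ * (matFun hρ Real.log - matFun hσ Real.log)).trace).re

/-- The Tsallis relative q-entropy `S_q(ρ‖σ) = (1/(1−q))(1 − Tr(ρ^q σ^{1−q}))`. -/
noncomputable def tsallisEntropy {d : ℕ} (q : ℝ) {ρ σ : Matrix (Fin d) (Fin d) ℂ}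
    (hρ : ρ.IsHermitian) (hσ : σ.IsHermitian) : ℝ :=
  (1 / (1 - q)) *
    (1 - ((matFun hρ (fun x => x ^ q) * matFun hσ (fun x => x ^ (1 - q))).trace).re)

theorem trace_key {d : ℕ} (U₁ U₂ : Matrix (Fin d) (Fin d) ℂ) (f g : Fin d → ℝ) :
    ((U₁ * diagonal (fun j => (f j : ℂ)) * star U₁ *
      (U₂ * diagonal (fun k => (g k : ℂ)) * star U₂)).trace).re
    = ∑ j, ∑ k, f j * g k * ‖(star U₂ * U₁) k j‖ ^ 2 := by
  have h : (U₁ * diagonal (fun j => (f j : ℂ)) * star U₁ *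
      (U₂ * diagonal (fun k => (g k : ℂ)) * star U₂)).trace
      = (diagonal (fun j => (f j : ℂ)) * (star (star U₂ * U₁)) *
        (diagonal (fun k => (g k : ℂ)) * (star U₂ * U₁))).trace := by
    rw [Matrix.star_mul, star_star]
    rw [show U₁ * diagonal (fun j => (f j : ℂ)) * star U₁ *
      (U₂ * diagonal (fun k => (g k : ℂ)) * star U₂)
      = U₁ * (diagonal (fun j => (f j : ℂ)) * ((star U₁ * U₂) *
        (diagonal (fun k => (g k : ℂ)) * star U₂))) by noncomm_ring]
    rw [Matrix.trace_mul_comm]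
    noncomm_ring
  rw [h]
  set W := star U₂ * U₁ with hW
  simp only [Matrix.trace, Matrix.diag, Matrix.mul_apply, Matrix.diagonal_apply,
    ite_mul, zero_mul, Finset.sum_ite_eq, Finset.mem_univ, if_true,
    Matrix.star_apply, Complex.re_sum]
  apply Finset.sum_congr rfl; intro j _
  apply Finset.sum_congr rfl; intro x _
  have h2 : ((f j : ℂ) * star (W x j) * ((g x : ℂ) * W x j))
      = ((f j * g x * ‖W x j‖ ^ 2 : ℝ) : ℂ) := by
    rw [show (f j : ℂ) * star (W x j) * ((g x : ℂ) * W x j)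
        = (f j : ℂ) * (g x : ℂ) * (star (W x j) * W x j) by ring,
      Complex.star_def, RCLike.conj_mul]
    norm_cast
    exact (Complex.ofReal_mul _ _).symm
  rw [h2, Complex.ofReal_re]


theorem pointwise_log_bound {a l x y : ℝ} (ha : 0 < a) (hal : a < l)
    (hx : 0 < x) (hxl : x ≤ l) (hy : a ≤ y) :
    x * (Real.log x - Real.log y) ≤
      l * ((Real.log l - Real.log a) / (l - a)) * |x - y| := by
  have hy0 : 0 < y := lt_of_lt_of_le ha hy
  have hl0 : 0 < l := lt_trans ha hal
  have hla : 0 < l - a := by linarith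
  have hK : 0 ≤ (Real.log l - Real.log a) / (l - a) := by
    apply div_nonneg _ (le_of_lt hla)
    have := Real.log_le_log ha (le_of_lt hal)
    linarith
  rcases le_or_gt x y with hxy | hxy
  · have h1 : Real.log x ≤ Real.log y := Real.log_le_log hx hxy
    have : x * (Real.log x - Real.log y) ≤ 0 := by
      apply mul_nonpos_of_nonneg_of_nonpos (le_of_lt hx) (by linarith)
    refine le_trans this ?_
    positivity
  · rw [abs_of_pos (by linarith : (0:ℝ) < x - y)]
    rw [show l * ((Real.log l - Real.log a) / (l - a)) * (x - y)
        = l * (Real.log l - Real.log a) * (x - y) / (l - a) by ring,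
      le_div_iff₀ hla]
    have hL1n : 0 ≤ Real.log x - Real.log y := by
      have := Real.log_le_log hy0 (le_of_lt hxy); linarith
    have h1 : y * (Real.log x - Real.log y) ≤ x - y := by
      have h := Real.log_le_sub_one_of_pos (show (0:ℝ) < x / y by positivity)
      rw [Real.log_div (ne_of_gt hx) (ne_of_gt hy0)] at h
      have h' := mul_le_mul_of_nonneg_left h (le_of_lt hy0)
      have he : y * (x / y - 1) = x - y := by field_simp
      linarith [he ▸ h']
    have h2 : l * y - a * x ≤
        l * y * ((Real.log l - Real.log a) - (Real.log x - Real.log y)) := by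
      have h := Real.log_le_sub_one_of_pos (show (0:ℝ) < (a * x) / (l * y) by positivity)
      rw [Real.log_div (by positivity) (by positivity),
        Real.log_mul (ne_of_gt ha) (ne_of_gt hx),
        Real.log_mul (ne_of_gt hl0) (ne_of_gt hy0)] at h
      have h' := mul_le_mul_of_nonneg_left h (show (0:ℝ) ≤ l * y by positivity)
      have he : l * y * (a * x / (l * y) - 1) = a * x - l * y := by field_simp
      nlinarith [he ▸ h']
    have hlyax : 0 ≤ l * y - a * x := by nlinarith
    rw [← mul_le_mul_iff_of_pos_right hy0]
    nlinarith [mul_le_mul_of_nonneg_right h1 hlyax,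
      mul_le_mul_of_nonneg_left h2 (show (0:ℝ) ≤ x - y by linarith)]


section aux
variable {d : ℕ} {A : Matrix (Fin d) (Fin d) ℂ} (hA : A.IsHermitian)

lemma matFun_id : matFun hA (fun x => x) = A := by
  rw [matFun]
  exact (hA.spectral_theorem).symm

lemma matFun_mul_matFun (f g : ℝ → ℝ) :
    matFun hA f * matFun hA g = matFun hA (fun x => f x * g x) := by
  rw [matFun, matFun, matFun]
  have h1 : (star hA.eigenvectorUnitary : Matrix (Fin d) (Fin d) ℂ) *
      (hA.eigenvectorUnitary : Matrix (Fin d) (Fin d) ℂ) = 1 := by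
    exact Matrix.UnitaryGroup.star_mul_self _
  rw [show ∀ (U V : Matrix (Fin d) (Fin d) ℂ) (D₁ D₂ : Matrix (Fin d) (Fin d) ℂ),
    U * D₁ * V * (U * D₂ * V) = U * (D₁ * (V * U) * D₂) * V by intros; noncomm_ring,
    h1, mul_one, Matrix.diagonal_mul_diagonal]
  congr 1
  congr 1
  funext i
  push_cast
  ring

lemma trace_matFun (f : ℝ → ℝ) :
    (matFun hA f).trace = ∑ i, (f (hA.eigenvalues i) : ℂ) := by
  rw [matFun, Matrix.trace_mul_cycle]
  have h1 : (star hA.eigenvectorUnitary : Matrix (Fin d) (Fin d) ℂ) *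
      (hA.eigenvectorUnitary : Matrix (Fin d) (Fin d) ℂ) = 1 := by
    exact Matrix.UnitaryGroup.star_mul_self _
  rw [h1, one_mul, Matrix.trace_diagonal]

lemma matFun_posSemidef (f : ℝ → ℝ) (hf : ∀ i, 0 ≤ f (hA.eigenvalues i)) :
    (matFun hA f).PosSemidef := by
  have hd : (Matrix.diagonal (fun i => (f (hA.eigenvalues i) : ℂ))).PosSemidef := by
    rw [Matrix.posSemidef_diagonal_iff]
    intro i
    rw [show ((f (hA.eigenvalues i) : ℝ) : ℂ) = ((f (hA.eigenvalues i) : ℝ) : ℂ) from rfl]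
    exact_mod_cast Complex.zero_le_real.mpr (hf i)
  have := hd.mul_mul_conjTranspose_same (hA.eigenvectorUnitary : Matrix (Fin d) (Fin d) ℂ)
  rw [matFun, Matrix.star_eq_conjTranspose]
  exact this

end aux

section aux2
variable {d : ℕ} {A : Matrix (Fin d) (Fin d) ℂ} (hA : A.IsHermitian)

lemma trace_eq_sum_eigen : A.trace = ∑ i, (hA.eigenvalues i : ℂ) := by
  conv_lhs => rw [← matFun_id hA]
  rw [trace_matFun]

lemma traceNorm_eq_sum_abs : traceNorm A = ∑ i, |hA.eigenvalues i| := by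
  have habs : (matFun hA fun x => |x|).PosSemidef :=
    matFun_posSemidef _ _ (fun i => abs_nonneg _)
  have hsq : (matFun hA fun x => |x|) ^ 2 = Aᴴ * A := by
    rw [pow_two, matFun_mul_matFun,
      show (fun x : ℝ => |x| * |x|) = fun x : ℝ => x * x from
        funext fun x => abs_mul_abs_self x,
      ← matFun_mul_matFun, matFun_id, hA.eq]
  have hB := (Matrix.posSemidef_conjTranspose_mul_self A).1
  have e1 : traceNorm A = (cfc Real.sqrt (Aᴴ * A)).trace.re := by
    rw [hB.cfc_eq, Matrix.IsHermitian.cfc]; rfl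
  have h : cfc Real.sqrt (Aᴴ * A) = matFun hA (fun x => |x|) := by
    have hsa : IsSelfAdjoint A := hA
    have hAA : A * A = cfc (fun x : ℝ => x * x) A := by
      rw [cfc_mul (fun x : ℝ => x) (fun x : ℝ => x) A, cfc_id' ℝ A]
    rw [hA.eq, hAA, ← cfc_comp' Real.sqrt (fun x : ℝ => x * x) A]
    simp only [Real.sqrt_mul_self_eq_abs]
    rw [hA.cfc_eq, Matrix.IsHermitian.cfc]; rfl
  rw [e1, h, trace_matFun]
  rw [Complex.re_sum]
  simp

end aux2

lemma trace_matFun_mul_matFun {d : ℕ} {A B : Matrix (Fin d) (Fin d) ℂ}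
    (hA : A.IsHermitian) (hB : B.IsHermitian) (f g : ℝ → ℝ) :
    ((matFun hA f * matFun hB g).trace).re
    = ∑ j, ∑ k, f (hA.eigenvalues j) * g (hB.eigenvalues k) *
      ‖((star hB.eigenvectorUnitary : Matrix (Fin d) (Fin d) ℂ) *
        (hA.eigenvectorUnitary : Matrix (Fin d) (Fin d) ℂ)) k j‖ ^ 2 := by
  have := trace_key (hA.eigenvectorUnitary : Matrix (Fin d) (Fin d) ℂ)
    (hB.eigenvectorUnitary : Matrix (Fin d) (Fin d) ℂ)
    (fun j => f (hA.eigenvalues j)) (fun k => g (hB.eigenvalues k))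
  rw [matFun, matFun]
  convert this using 3

set_option maxHeartbeats 1000000 in
/-- upper continuity bound on the Umegaki relative entropy for qubits. -/
theorem relEntropy_le_of_qubits
    (ρ σ : Matrix (Fin 2) (Fin 2) ℂ) (hρ : ρ.PosDef) (hσ : σ.PosDef)
    (hρtr : ρ.trace = 1) (hσtr : σ.trace = 1)
    (lρ aσ : ℝ)
    (hl : IsGreatest (Set.range hρ.1.eigenvalues) lρ)
    (haσ : IsLeast (Set.range hσ.1.eigenvalues) aσ)
    (hlt : aσ < lρ) :
    relEntropy hρ.1 hσ.1 ≤
        traceNorm (ρ - σ) * lρ * ((Real.log lρ - Real.log aσ) / (lρ - aσ)) ∧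
      traceNorm (ρ - σ) * lρ * ((Real.log lρ - Real.log aσ) / (lρ - aσ)) ≤
        traceNorm (ρ - σ) * lρ / aσ := by
  have hρh := hρ.1
  have hσh := hσ.1
  set lam := hρh.eigenvalues with hlam
  set mu := hσh.eigenvalues with hmu
  set P : Fin 2 → Fin 2 → ℝ := fun j k =>
    ‖((star hσh.eigenvectorUnitary : Matrix (Fin 2) (Fin 2) ℂ) *
      (hρh.eigenvectorUnitary : Matrix (Fin 2) (Fin 2) ℂ)) k j‖ ^ 2 with hP
  have h_lam_pos : ∀ j, 0 < lam j := hρ.eigenvalues_pos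
  have h_mu_pos : ∀ k, 0 < mu k := hσ.eigenvalues_pos
  have h_lam_le : ∀ j, lam j ≤ lρ := fun j => hl.2 ⟨j, rfl⟩
  have h_mu_ge : ∀ k, aσ ≤ mu k := fun k => haσ.2 ⟨k, rfl⟩
  have ha0 : 0 < aσ := by
    obtain ⟨k0, hk0⟩ := haσ.1
    exact hk0 ▸ h_mu_pos k0
  have hl0 : 0 < lρ := ha0.trans hlt
  have hPnn : ∀ j k, 0 ≤ P j k := fun j k => by positivity
  set Uρm := (hρh.eigenvectorUnitary : Matrix (Fin 2) (Fin 2) ℂ) with hUρm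
  set Uσm := (hσh.eigenvectorUnitary : Matrix (Fin 2) (Fin 2) ℂ) with hUσm
  have hcoe : (star hσh.eigenvectorUnitary : Matrix (Fin 2) (Fin 2) ℂ) = star Uσm := rfl
  have h1 : star Uρm * Uρm = 1 := Matrix.UnitaryGroup.star_mul_self _
  have h2 : Uρm * star Uρm = 1 := Unitary.coe_mul_star_self _
  have h3 : star Uσm * Uσm = 1 := Matrix.UnitaryGroup.star_mul_self _
  have h4 : Uσm * star Uσm = 1 := Unitary.coe_mul_star_self _
  set G := star Uσm * Uρm with hG
  have hPG : P = fun j k => ‖G k j‖ ^ 2 := by rw [hP]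
  have hz : ∀ z : ℂ, (star z * z).re = ‖z‖ ^ 2 := fun z => by
    rw [Complex.star_def, RCLike.conj_mul]; norm_cast
  have hW1 : star G * G = 1 := by
    rw [hG, Matrix.star_mul, star_star, mul_assoc, ← mul_assoc Uσm, h4, one_mul, h1]
  have hW2 : G * star G = 1 := by
    rw [hG, Matrix.star_mul, star_star, mul_assoc, ← mul_assoc Uρm, h2, one_mul, h3]
  have hrow : ∀ j, P j 0 + P j 1 = 1 := by
    intro j
    have e := congrArg (fun M : Matrix (Fin 2) (Fin 2) ℂ => (M j j).re) hW1
    simp only [Matrix.mul_apply, Matrix.star_apply, Fin.sum_univ_two,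
      Matrix.one_apply_eq, Complex.add_re, Complex.one_re] at e
    rw [hz, hz] at e
    rw [hPG]
    exact e
  have hcol : ∀ k, P 0 k + P 1 k = 1 := by
    intro k
    have e := congrArg (fun M : Matrix (Fin 2) (Fin 2) ℂ => (M k k).re) hW2
    simp only [Matrix.mul_apply, Matrix.star_apply, Fin.sum_univ_two,
      Matrix.one_apply_eq, Complex.add_re, Complex.one_re] at e
    have e' : (star (G k 0) * G k 0).re + (star (G k 1) * G k 1).re = 1 := by
      rw [mul_comm (star (G k 0)) (G k 0), mul_comm (star (G k 1)) (G k 1)]; exact e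
    rw [hz, hz] at e'
    rw [hPG]
    exact e'
  have hS1 : ((ρ * matFun hρh Real.log).trace).re
      = lam 0 * Real.log (lam 0) + lam 1 * Real.log (lam 1) := by
    rw [show ρ * matFun hρh Real.log = matFun hρh (fun x => x) * matFun hρh Real.log by
      rw [matFun_id], trace_matFun_mul_matFun hρh hρh (fun x => x) Real.log]
    simp only [← hUρm, h1, hlam]
    simp [Fin.sum_univ_two, Matrix.one_apply]
  have hS2 : ((ρ * matFun hσh Real.log).trace).re
      = ∑ j, ∑ k, lam j * Real.log (mu k) * P j k := by
    simp only [hP, hG, hUσm, hUρm, hlam, hmu]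
    rw [show ρ * matFun hσh Real.log = matFun hρh (fun x => x) * matFun hσh Real.log by
      rw [matFun_id]]
    exact trace_matFun_mul_matFun hρh hσh (fun x => x) Real.log
  have hS : relEntropy hρh hσh = ∑ j, ∑ k,
      lam j * (Real.log (lam j) - Real.log (mu k)) * P j k := by
    rw [relEntropy, mul_sub, Matrix.trace_sub, Complex.sub_re, hS1, hS2]
    simp only [Fin.sum_univ_two]
    linear_combination (lam 0 * Real.log (lam 0)) * (hrow 0).symm
      + (lam 1 * Real.log (lam 1)) * (hrow 1).symm
  have hΔ : (ρ - σ).IsHermitian := hρh.sub hσh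
  have hTN : traceNorm (ρ - σ) = |hΔ.eigenvalues 0| + |hΔ.eigenvalues 1| := by
    rw [traceNorm_eq_sum_abs hΔ, Fin.sum_univ_two]
  have hTNnn : 0 ≤ traceNorm (ρ - σ) := by rw [hTN]; positivity
  have he0 : hΔ.eigenvalues 0 + hΔ.eigenvalues 1 = 0 := by
    have h := trace_eq_sum_eigen hΔ
    rw [Matrix.trace_sub, hρtr, hσtr, sub_self, Fin.sum_univ_two] at h
    exact_mod_cast h.symm
  have hQ1 : (((ρ - σ) * (ρ - σ)).trace).re
      = hΔ.eigenvalues 0 ^ 2 + hΔ.eigenvalues 1 ^ 2 := by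
    rw [show (ρ - σ) * (ρ - σ) = matFun hΔ (fun x => x) * matFun hΔ (fun x => x) by
      rw [matFun_id], matFun_mul_matFun, trace_matFun, Fin.sum_univ_two]
    simp only [Complex.add_re, Complex.ofReal_re]
    ring
  have hρρ : ((ρ * ρ).trace).re = lam 0 ^ 2 + lam 1 ^ 2 := by
    rw [show ρ * ρ = matFun hρh (fun x => x) * matFun hρh (fun x => x) by
      rw [matFun_id], trace_matFun_mul_matFun hρh hρh (fun x => x) (fun x => x)]
    simp only [← hUρm, h1, hlam]
    simp [Fin.sum_univ_two, Matrix.one_apply]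
    ring
  have hσσ : ((σ * σ).trace).re = mu 0 ^ 2 + mu 1 ^ 2 := by
    rw [show σ * σ = matFun hσh (fun x => x) * matFun hσh (fun x => x) by
      rw [matFun_id], trace_matFun_mul_matFun hσh hσh (fun x => x) (fun x => x)]
    simp only [← hUσm, h3, hmu]
    simp [Fin.sum_univ_two, Matrix.one_apply]
    ring
  have hρσ : ((ρ * σ).trace).re = ∑ j, ∑ k, lam j * mu k * P j k := by
    simp only [hP, hG, hUσm, hUρm, hlam, hmu]
    rw [show ρ * σ = matFun hρh (fun x => x) * matFun hσh (fun x => x) by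
      rw [matFun_id, matFun_id]]
    exact trace_matFun_mul_matFun hρh hσh (fun x => x) (fun x => x)
  have hQ2 : (((ρ - σ) * (ρ - σ)).trace).re
      = (lam 0 ^ 2 + lam 1 ^ 2) + (mu 0 ^ 2 + mu 1 ^ 2)
        - 2 * ∑ j, ∑ k, lam j * mu k * P j k := by
    rw [sub_mul, mul_sub, mul_sub, Matrix.trace_sub, Matrix.trace_sub, Matrix.trace_sub,
      Matrix.trace_mul_comm σ ρ]
    simp only [Complex.sub_re]
    rw [hρρ, hσσ, hρσ]
    ring
  have hTNsq : traceNorm (ρ - σ) ^ 2 = 2 * ∑ j, ∑ k, (lam j - mu k) ^ 2 * P j k := by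
    have habs : |hΔ.eigenvalues 1| = |hΔ.eigenvalues 0| := by
      rw [show hΔ.eigenvalues 1 = -hΔ.eigenvalues 0 by linarith, abs_neg]
    have h5 : traceNorm (ρ - σ) ^ 2 = 2 * ((((ρ - σ) * (ρ - σ)).trace).re) := by
      rw [hTN, habs, hQ1, show hΔ.eigenvalues 1 = -hΔ.eigenvalues 0 by linarith]
      linear_combination 4 * sq_abs (hΔ.eigenvalues 0)
    rw [h5, hQ2]
    simp only [Fin.sum_univ_two]
    linear_combination (2 * lam 0 ^ 2) * (hrow 0).symm + (2 * lam 1 ^ 2) * (hrow 1).symm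
      + (2 * mu 0 ^ 2) * (hcol 0).symm + (2 * mu 1 ^ 2) * (hcol 1).symm
  -- scalar endgame
  set K := (Real.log lρ - Real.log aσ) / (lρ - aσ) with hK
  have hKnn : 0 ≤ K := by
    apply div_nonneg _ (by linarith)
    have := Real.log_le_log ha0 (le_of_lt hlt)
    linarith
  constructor
  · have hpt : ∀ j k, lam j * (Real.log (lam j) - Real.log (mu k)) * P j k ≤
        (lρ * K * |lam j - mu k|) * P j k := fun j k =>
      mul_le_mul_of_nonneg_right
        (pointwise_log_bound ha0 hlt (h_lam_pos j) (h_lam_le j) (h_mu_ge k)) (hPnn j k)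
    have hCS : ∑ j, ∑ k, |lam j - mu k| * P j k ≤ traceNorm (ρ - σ) := by
      have hL : (0:ℝ) ≤ ∑ j, ∑ k, |lam j - mu k| * P j k := by
        apply Finset.sum_nonneg; intro j _
        apply Finset.sum_nonneg; intro k _
        exact mul_nonneg (abs_nonneg _) (hPnn j k)
      have hsq : (∑ j, ∑ k, |lam j - mu k| * P j k) ^ 2 ≤ traceNorm (ρ - σ) ^ 2 := by
        rw [hTNsq]
        simp only [Fin.sum_univ_two]
        have hp2 : P 0 0 + P 0 1 + P 1 0 + P 1 1 = 2 := by linarith [hrow 0, hrow 1]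
        rw [← sq_abs (lam 0 - mu 0), ← sq_abs (lam 0 - mu 1),
          ← sq_abs (lam 1 - mu 0), ← sq_abs (lam 1 - mu 1)]
        have expand : 2 * (|lam 0 - mu 0|^2 * P 0 0 + |lam 0 - mu 1|^2 * P 0 1
              + (|lam 1 - mu 0|^2 * P 1 0 + |lam 1 - mu 1|^2 * P 1 1))
            - (|lam 0 - mu 0| * P 0 0 + |lam 0 - mu 1| * P 0 1
              + (|lam 1 - mu 0| * P 1 0 + |lam 1 - mu 1| * P 1 1)) ^ 2
            = P 0 0 * P 0 1 * (|lam 0 - mu 0| - |lam 0 - mu 1|)^2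
            + P 0 0 * P 1 0 * (|lam 0 - mu 0| - |lam 1 - mu 0|)^2
            + P 0 0 * P 1 1 * (|lam 0 - mu 0| - |lam 1 - mu 1|)^2
            + P 0 1 * P 1 0 * (|lam 0 - mu 1| - |lam 1 - mu 0|)^2
            + P 0 1 * P 1 1 * (|lam 0 - mu 1| - |lam 1 - mu 1|)^2
            + P 1 0 * P 1 1 * (|lam 1 - mu 0| - |lam 1 - mu 1|)^2
            + (2 - (P 0 0 + P 0 1 + P 1 0 + P 1 1)) *
              (|lam 0 - mu 0|^2 * P 0 0 + |lam 0 - mu 1|^2 * P 0 1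
                + |lam 1 - mu 0|^2 * P 1 0 + |lam 1 - mu 1|^2 * P 1 1) := by
          ring
        have t1 : 0 ≤ P 0 0 * P 0 1 * (|lam 0 - mu 0| - |lam 0 - mu 1|)^2 :=
          mul_nonneg (mul_nonneg (hPnn 0 0) (hPnn 0 1)) (sq_nonneg _)
        have t2 : 0 ≤ P 0 0 * P 1 0 * (|lam 0 - mu 0| - |lam 1 - mu 0|)^2 :=
          mul_nonneg (mul_nonneg (hPnn 0 0) (hPnn 1 0)) (sq_nonneg _)
        have t3 : 0 ≤ P 0 0 * P 1 1 * (|lam 0 - mu 0| - |lam 1 - mu 1|)^2 :=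
          mul_nonneg (mul_nonneg (hPnn 0 0) (hPnn 1 1)) (sq_nonneg _)
        have t4 : 0 ≤ P 0 1 * P 1 0 * (|lam 0 - mu 1| - |lam 1 - mu 0|)^2 :=
          mul_nonneg (mul_nonneg (hPnn 0 1) (hPnn 1 0)) (sq_nonneg _)
        have t5 : 0 ≤ P 0 1 * P 1 1 * (|lam 0 - mu 1| - |lam 1 - mu 1|)^2 :=
          mul_nonneg (mul_nonneg (hPnn 0 1) (hPnn 1 1)) (sq_nonneg _)
        have t6 : 0 ≤ P 1 0 * P 1 1 * (|lam 1 - mu 0| - |lam 1 - mu 1|)^2 :=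
          mul_nonneg (mul_nonneg (hPnn 1 0) (hPnn 1 1)) (sq_nonneg _)
        rw [hp2] at expand
        linarith [expand, t1, t2, t3, t4, t5, t6]
      nlinarith [hsq, hL, hTNnn]
    calc relEntropy hρh hσh ≤ ∑ j, ∑ k, (lρ * K * |lam j - mu k|) * P j k := by
          rw [hS]; exact Finset.sum_le_sum fun j _ => Finset.sum_le_sum fun k _ => hpt j k
      _ = (lρ * K) * ∑ j, ∑ k, |lam j - mu k| * P j k := by
          rw [Finset.mul_sum]; exact Finset.sum_congr rfl fun j _ => by
            rw [Finset.mul_sum]; exact Finset.sum_congr rfl fun k _ => by ring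
      _ ≤ (lρ * K) * traceNorm (ρ - σ) := by
          apply mul_le_mul_of_nonneg_left hCS (by positivity)
      _ = traceNorm (ρ - σ) * lρ * K := by ring
  · have hK1 : K ≤ 1 / aσ := by
      rw [hK, div_le_div_iff₀ (by linarith) ha0]
      have := Real.log_le_sub_one_of_pos (show (0:ℝ) < lρ / aσ by positivity)
      rw [Real.log_div (ne_of_gt hl0) (ne_of_gt ha0)] at this
      have h2 : aσ * (lρ / aσ - 1) = lρ - aσ := by field_simp
      nlinarith [this]
    calc traceNorm (ρ - σ) * lρ * K ≤ traceNorm (ρ - σ) * lρ * (1 / aσ) := by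
          apply mul_le_mul_of_nonneg_left hK1 (by positivity)
      _ = traceNorm (ρ - σ) * lρ / aσ := by ring
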